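/- Let σ be the semimetric on the vertex set V of G_d defined by σ(y_s,y_t) = Hamm(s,t), σ(y_s,z_t) = Hamm(s,t) + √d, σ(z_s,z_t) = Hamm(s,t) + 2√d for s ≠ t, and σ(u,u) = 0. Then the nonnegative weight function δ that assigns weight 1 to each of the d axis cuts U_i = {z_s, y_s : s_i = 1} (for i = 1,…,d) and weight √d to each of the k singleton sets {z_s} satisfies σ(u,v) = Σ_U δ(U) Δ_U(u,v) for all u,v ∈ V, and the total cost satisfies Σ_U δ(U) h(U) ≤ 2·k·d (indeed it equals (3/2)·k·d). In particular σ is an ℓ1 semimetric on V. -/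

import Mathlib

open Finset

/-- Vertices of the `d`-dimensional Boolean hypercube. -/
abbrev Cube (d : ℕ) := Fin d → Bool

/-- Hamming distance between two Boolean strings. -/
def hamm {d : ℕ} (s t : Cube d) : ℕ := (Finset.univ.filter fun i => s i ≠ t i).card

/-- The vertex set of the graph `G_d`: `Sum.inl s` is the hypercube vertex `y_s`,
`Sum.inr s` is the terminal `z_s`. -/
abbrev Vtx (d : ℕ) := Cube d ⊕ Cube d

/-- Edge capacities of the graph `G_d`: hypercube edges (Hamming distance `1`) have
capacity `1`, each terminal `z_s` is attached to `y_s` by an edge of capacity `√d`. -/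
noncomputable def gCap (d : ℕ) : Vtx d → Vtx d → ℝ
  | Sum.inl s, Sum.inl t => if hamm s t = 1 then 1 else 0
  | Sum.inl s, Sum.inr t => if s = t then Real.sqrt d else 0
  | Sum.inr s, Sum.inl t => if s = t then Real.sqrt d else 0
  | Sum.inr _, Sum.inr _ => 0

/-- The cut function of a capacitated graph: total capacity of edges crossing `A`.
(Each unordered crossing edge `{u,v}` with `u ∈ A`, `v ∉ A` is counted once.) -/
noncomputable def cutFun {V : Type*} [Fintype V] [DecidableEq V]
    (c : V → V → ℝ) (A : Finset V) : ℝ :=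
  ∑ u ∈ A, ∑ v ∈ Aᶜ, c u v

/-- The terminal set `K = {z_s}` of `G_d`. -/
def Kset (d : ℕ) : Finset (Vtx d) := Finset.univ.image Sum.inr

/-- The terminal cut function: `h_K(U) = min { h(A) : A ∩ K = U }`. -/
noncomputable def termCut {V : Type*} [Fintype V] [DecidableEq V]
    (c : V → V → ℝ) (K U : Finset V) : ℝ :=
  sInf {x : ℝ | ∃ A : Finset V, A ∩ K = U ∧ cutFun c A = x}

/-- The terminal cut function of `G_d`, for a set `A` of terminals (identified with
Boolean strings). -/
noncomputable def hK (d : ℕ) (A : Finset (Cube d)) : ℝ :=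
  termCut (gCap d) (Kset d) (A.image Sum.inr)

/-- The cut (semi)metric `Δ_U` associated with a subset `U`. -/
def cutMetric {V : Type*} [DecidableEq V] (U : Finset V) (u v : V) : ℝ :=
  if (u ∈ U ↔ v ∈ U) then 0 else 1

/-- The semimetric `σ` on the vertices of `G_d`. -/
noncomputable def sigmaMet (d : ℕ) : Vtx d → Vtx d → ℝ
  | Sum.inl s, Sum.inl t => hamm s t
  | Sum.inl s, Sum.inr t => hamm s t + Real.sqrt d
  | Sum.inr s, Sum.inl t => hamm s t + Real.sqrt d
  | Sum.inr s, Sum.inr t => if s = t then 0 else hamm s t + 2 * Real.sqrt d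

/-- The axis cut `U_i = {z_s, y_s : s_i = 1}`. -/
def axisCut (d : ℕ) (i : Fin d) : Finset (Vtx d) :=
  Finset.univ.filter fun u => (Sum.elim (fun s => s i) (fun s => s i) u) = true

lemma hamm_cast {d : ℕ} (s t : Cube d) :
    (hamm s t : ℝ) = ∑ i : Fin d, if s i = t i then 0 else 1 := by
  rw [hamm, Finset.card_filter]
  push_cast
  refine Finset.sum_congr rfl fun i _ => ?_
  by_cases h : s i = t i <;> simp [h]

lemma mem_axisCut {d : ℕ} {i : Fin d} {u : Vtx d} :
    u ∈ axisCut d i ↔ Sum.elim (fun s => s i) (fun s => s i) u = true := by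
  simp [axisCut]

lemma cutMetric_axis {d : ℕ} (i : Fin d) (u v : Vtx d) :
    cutMetric (axisCut d i) u v =
      if Sum.elim (fun s => s i) (fun s => s i) u
          = Sum.elim (fun s => s i) (fun s => s i) v then 0 else 1 := by
  rw [cutMetric]
  cases h1 : Sum.elim (fun s => s i) (fun s => s i) u <;>
  cases h2 : Sum.elim (fun s => s i) (fun s => s i) v <;>
  simp [mem_axisCut, h1, h2]

lemma hamm_one_eq {d : ℕ} {s t : Cube d} {i : Fin d} (h : hamm s t = 1) (hi : s i ≠ t i)
    {j : Fin d} (hj : j ≠ i) : s j = t j := by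
  by_contra hne
  have hjm : j ∈ Finset.univ.filter fun k => s k ≠ t k := by simp [hne]
  have him : i ∈ Finset.univ.filter fun k => s k ≠ t k := by simp [hi]
  have h2 := Finset.one_lt_card.2 ⟨j, hjm, i, him, hj⟩
  rw [hamm] at h
  omega

/-- The weight function assigning weight `1` to each of the `d` axis
cuts and weight `√d` to each singleton `{z_s}` decomposes `σ` as a weighted sum of cut
metrics, and its total cost `Σ_U δ(U) h(U)` is at most `2 · k · d`.  In particular `σ`
is an `ℓ₁` semimetric on `V`. -/
theorem sigma_cut_decomposition (d : ℕ) (hd : 1 ≤ d) :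
    (∀ u v : Vtx d,
      sigmaMet d u v =
        (∑ i : Fin d, cutMetric (axisCut d i) u v) +
          ∑ s : Cube d, Real.sqrt d * cutMetric ({Sum.inr s} : Finset (Vtx d)) u v) ∧
    (∑ i : Fin d, cutFun (gCap d) (axisCut d i)) +
        (∑ s : Cube d, Real.sqrt d * cutFun (gCap d) ({Sum.inr s} : Finset (Vtx d)))
      ≤ 2 * 2 ^ d * d := by
  have hcard : Fintype.card (Cube d) = 2 ^ d := by simp [Fintype.card_fun]
  constructor
  · rintro (s | s) (t | t)
    · simp only [sigmaMet, cutMetric_axis, Sum.elim_inl]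
      erw [← hamm_cast]
      simp [cutMetric]
    · simp only [sigmaMet, cutMetric_axis, Sum.elim_inl, Sum.elim_inr]
      have hsg : ∀ a : Cube d, cutMetric ({Sum.inr a} : Finset (Vtx d)) (Sum.inl s) (Sum.inr t)
          = if a = t then 1 else 0 := by
        intro a
        by_cases h : a = t
        · simp [cutMetric, h]
        · simp [cutMetric, h, Ne.symm h]
      erw [← hamm_cast]
      simp [hsg, mul_ite]
    · simp only [sigmaMet, cutMetric_axis, Sum.elim_inl, Sum.elim_inr]
      have hsg : ∀ a : Cube d, cutMetric ({Sum.inr a} : Finset (Vtx d)) (Sum.inr s) (Sum.inl t)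
          = if a = s then 1 else 0 := by
        intro a
        by_cases h : a = s
        · simp [cutMetric, h]
        · simp [cutMetric, h, Ne.symm h]
      erw [← hamm_cast]
      simp [hsg, mul_ite]
    · by_cases hst : s = t
      · subst hst
        simp [sigmaMet, cutMetric]
      · simp only [sigmaMet, cutMetric_axis, Sum.elim_inr, if_neg hst]
        have hsg : ∀ a : Cube d, cutMetric ({Sum.inr a} : Finset (Vtx d)) (Sum.inr s) (Sum.inr t)
            = (if a = s then (1:ℝ) else 0) + (if a = t then 1 else 0) := by
          intro a
          by_cases h1 : a = s
          · subst h1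
            simp [cutMetric, hst, Ne.symm hst, (Ne.symm hst : t ≠ a)]
          · by_cases h2 : a = t
            · subst h2
              simp [cutMetric, h1, Ne.symm h1]
            · simp [cutMetric, h1, h2, Ne.symm h1, Ne.symm h2]
        erw [← hamm_cast]
        simp only [hsg, mul_add, mul_ite, mul_one, mul_zero, Finset.sum_add_distrib,
          Finset.sum_ite_eq', Finset.mem_univ, if_true]
        ring
  · have hsing : ∀ s : Cube d,
        cutFun (gCap d) ({Sum.inr s} : Finset (Vtx d)) = Real.sqrt d := by
      intro s
      rw [cutFun, Finset.sum_singleton]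
      have h1 : ∀ v : Vtx d, gCap d (Sum.inr s) v = if v = Sum.inl s then Real.sqrt d else 0 := by
        rintro (t | t)
        · by_cases h : s = t
          · subst h; simp [gCap]
          · simp [gCap, h, Ne.symm h]
        · simp [gCap]
      rw [Finset.sum_congr rfl fun v _ => h1 v, Finset.sum_ite_eq']
      simp
    have haxis : ∀ i : Fin d, cutFun (gCap d) (axisCut d i) ≤ 2 ^ d := by
      intro i
      rw [cutFun]
      have hB : ∀ u ∈ axisCut d i,
          ∑ v ∈ (axisCut d i)ᶜ, gCap d u v ≤ Sum.elim (fun _ => (1:ℝ)) (fun _ => 0) u := by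
        intro u hu
        have hcm : ∀ t : Cube d, Sum.inl t ∈ (axisCut d i)ᶜ → t i = false := by
          intro t hv
          have := Finset.mem_compl.1 hv
          simp [axisCut] at this
          simpa using this
        have hcm' : ∀ t : Cube d, Sum.inr t ∈ (axisCut d i)ᶜ → t i = false := by
          intro t hv
          have := Finset.mem_compl.1 hv
          simp [axisCut] at this
          simpa using this
        rcases u with s | s
        · have hsi : s i = true := by simpa [axisCut] using hu
          simp only [Sum.elim_inl]
          have hb : ∀ v ∈ (axisCut d i)ᶜ,
              gCap d (Sum.inl s) v ≤ if v = Sum.inl (Function.update s i false) then 1 else 0 := by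
            rintro (t | t) hv
            · have hti : t i = false := hcm t hv
              by_cases hh : hamm s t = 1
              · have hteq : t = Function.update s i false := by
                  funext j
                  by_cases hj : j = i
                  · subst hj; simp [hti]
                  · rw [Function.update_of_ne hj]
                    exact (hamm_one_eq hh (by rw [hsi, hti]; simp) hj).symm
                simp [gCap, hh, ← hteq]
              · simp only [gCap, if_neg hh]
                split <;> norm_num
            · have hti : t i = false := hcm' t hv
              have hst : s ≠ t := by
                intro h; rw [h, hti] at hsi; exact Bool.false_ne_true hsi
              simp only [gCap, if_neg hst]
              split <;> norm_num
          calc ∑ v ∈ (axisCut d i)ᶜ, gCap d (Sum.inl s) v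
              ≤ ∑ v ∈ (axisCut d i)ᶜ,
                  if v = Sum.inl (Function.update s i false) then 1 else 0 :=
                Finset.sum_le_sum hb
            _ = if Sum.inl (Function.update s i false) ∈ (axisCut d i)ᶜ then 1 else 0 :=
                Finset.sum_ite_eq' _ _ _
            _ ≤ 1 := by split <;> norm_num
        · have hsi : s i = true := by simpa [axisCut] using hu
          simp only [Sum.elim_inr]
          have hz : ∀ v ∈ (axisCut d i)ᶜ, gCap d (Sum.inr s) v = 0 := by
            rintro (t | t) hv
            · have hti : t i = false := hcm t hv
              have hst : s ≠ t := by
                intro h; rw [h, hti] at hsi; exact Bool.false_ne_true hsi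
              simp [gCap, hst]
            · simp [gCap]
          rw [Finset.sum_congr rfl hz]
          simp
      calc ∑ u ∈ axisCut d i, ∑ v ∈ (axisCut d i)ᶜ, gCap d u v
          ≤ ∑ u ∈ axisCut d i, Sum.elim (fun _ => (1:ℝ)) (fun _ => 0) u := Finset.sum_le_sum hB
        _ ≤ ∑ u : Vtx d, Sum.elim (fun _ => (1:ℝ)) (fun _ => 0) u := by
            apply Finset.sum_le_sum_of_subset_of_nonneg (Finset.subset_univ _)
            rintro (t | t) _ _ <;> simp
        _ = 2 ^ d := by
            rw [Fintype.sum_sum_type]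
            simp only [Sum.elim_inl, Sum.elim_inr, Finset.sum_const, Finset.card_univ, hcard,
              nsmul_eq_mul, mul_one, Finset.sum_const_zero, add_zero]
            push_cast
            ring
    have h1 : ∑ i : Fin d, cutFun (gCap d) (axisCut d i) ≤ (d : ℝ) * 2 ^ d := by
      calc ∑ i : Fin d, cutFun (gCap d) (axisCut d i) ≤ ∑ _i : Fin d, (2:ℝ) ^ d :=
          Finset.sum_le_sum fun i _ => haxis i
        _ = d * 2 ^ d := by
          rw [Finset.sum_const, Finset.card_univ, Fintype.card_fin, nsmul_eq_mul]
    have h2 : ∑ s : Cube d, Real.sqrt d * cutFun (gCap d) ({Sum.inr s} : Finset (Vtx d))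
        = (2:ℝ) ^ d * d := by
      simp only [hsing]
      rw [Finset.sum_const, Finset.card_univ, hcard, nsmul_eq_mul,
        Real.mul_self_sqrt (by positivity)]
      push_cast
      ring
    calc (∑ i : Fin d, cutFun (gCap d) (axisCut d i)) +
          (∑ s : Cube d, Real.sqrt d * cutFun (gCap d) ({Sum.inr s} : Finset (Vtx d)))
        ≤ (d : ℝ) * 2 ^ d + (2:ℝ) ^ d * d := add_le_add h1 (le_of_eq h2)
      _ = 2 * 2 ^ d * d := by ring
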